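/- The language of a Parikh constraint is PMTA-recognizable: let Σ be a finite alphabet, V = {X₁,…,X_r, Y₁,…,Y_k} a finite set of pairwise distinct variables, Σ_V = Σ × 𝒫(V), and write ξ(ρ) = (σ^ξ_ρ, θ^ξ_ρ) for ξ ∈ T^ω_{Σ_V}. Given constants c, d ∈ ℕ and coefficients c₁,…,c_r ≥ 1 and d₁,…,d_k ≥ 1, the language L(χ) = { ξ ∈ T^ω_{Σ_V} : c + Σ_{ρ ∈ {0,1}*} Σ_{i : X_i ∈ θ^ξ_ρ} c_i ≤ d + Σ_{ρ ∈ {0,1}*} Σ_{j : Y_j ∈ θ^ξ_ρ} d_j < ∞ }, where both (possibly infinite) sums are evaluated in ℕ ∪ {∞}, is PMTA-recognizable (by a PMTA of dimension 2). -/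

import Mathlib

/-- Positions in a binary tree: finite words over `{0,1}`. -/
abbrev Pos : Type := List Bool

/-- Vectors of natural numbers of dimension `s`. -/
abbrev Vec (s : ℕ) : Type := Fin s → ℕ

/-- An infinite path: a sequence of positions starting at the root, each step
descending to a child. -/
def IsPath (π : ℕ → Pos) : Prop :=
  π 0 = [] ∧ ∀ i : ℕ, ∃ b : Bool, π (i + 1) = π i ++ [b]

/-- The set of values occurring infinitely often in a sequence. -/
def infOcc {Q : Type*} (g : ℕ → Q) : Set Q :=
  {q | {n : ℕ | g n = q}.Infinite}

/-- A linear subset of `ℕ^s`. -/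
def IsLinearSetNat {s : ℕ} (C : Set (Vec s)) : Prop :=
  ∃ (l : ℕ) (v₀ : Vec s) (v : Fin l → Vec s),
    C = {w | ∃ m : Fin l → ℕ, w = v₀ + ∑ i, m i • v i}

/-- A semilinear subset of `ℕ^s`: a finite union of linear sets. -/
def IsSemilinearSetNat {s : ℕ} (C : Set (Vec s)) : Prop :=
  ∃ (k : ℕ) (Cs : Fin k → Set (Vec s)),
    (∀ i, IsLinearSetNat (Cs i)) ∧ C = ⋃ i, Cs i

/-- A Parikh-Muller tree automaton of dimension `s` over the alphabet `σ`.
Labels in `Σ × D` are modelled as pairs `(a, some d)` and labels in `Σ` as `(a, none)`. -/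
structure PMTA (σ : Type) (s : ℕ) where
  /-- states -/
  Q : Type
  finQ : Finite Q
  /-- counting states -/
  QP : Set Q
  /-- Muller states -/
  Qω : Set Q
  hdisj : Disjoint QP Qω
  hcover : QP ∪ Qω = Set.univ
  /-- initial state -/
  qI : Q
  /-- the finite set of counter increments -/
  D : Set (Vec s)
  hD : D.Finite
  /-- counting transitions -/
  ΔP : Set (Q × (σ × Vec s) × Q × Q)
  /-- Muller transitions -/
  Δω : Set (Q × σ × Q × Q)
  hΔP : ∀ t ∈ ΔP, t.1 ∈ QP ∪ {qI} ∧ t.2.1.2 ∈ D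
  hΔω : ∀ t ∈ Δω, t.1 ∈ Qω ∪ {qI} ∧ t.2.2.1 ∈ Qω ∧ t.2.2.2 ∈ Qω
  /-- the Muller acceptance family -/
  F : Set (Set Q)
  hF : ∀ X ∈ F, X ⊆ Qω
  /-- the semilinear Parikh constraint -/
  C : Set (Vec s)
  hC : IsSemilinearSetNat C

namespace PMTA

variable {σ : Type} {s : ℕ}

/-- A run of a PMTA on a tree `ζ` over `(Σ × D) ∪ Σ`. -/
def IsRun (A : PMTA σ s) (ζ : Pos → σ × Option (Vec s)) (κ : Pos → A.Q) : Prop :=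
  κ [] = A.qI ∧
  (∀ (ρ : Pos) (d : Vec s), (ζ ρ).2 = some d →
      (κ ρ, ((ζ ρ).1, d), κ (ρ ++ [false]), κ (ρ ++ [true])) ∈ A.ΔP) ∧
  (∀ ρ : Pos, (ζ ρ).2 = none →
      (κ ρ, (ζ ρ).1, κ (ρ ++ [false]), κ (ρ ++ [true])) ∈ A.Δω)

/-- The positions of `ζ` carrying a label from `Σ × D`. -/
def cntPos (ζ : Pos → σ × Option (Vec s)) : Set Pos := {ρ | (ζ ρ).2 ≠ none}

/-- The extended Parikh map: the sum of all `D`-components occurring in `ζ`. -/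
noncomputable def parikh (ζ : Pos → σ × Option (Vec s)) : Vec s :=
  ∑ᶠ ρ : Pos, ((ζ ρ).2.getD 0)

/-- An accepting run: the counting part is finite, the Parikh constraint is satisfied
whenever some counting position exists, all counter increments stem from `D`,
and every infinite path satisfies the Muller condition. -/
def IsAcceptingRun (A : PMTA σ s) (ζ : Pos → σ × Option (Vec s)) (κ : Pos → A.Q) : Prop :=
  A.IsRun ζ κ ∧ (cntPos ζ).Finite ∧
  ((cntPos ζ).Nonempty → parikh ζ ∈ A.C) ∧
  (∀ (ρ : Pos) (d : Vec s), (ζ ρ).2 = some d → d ∈ A.D) ∧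
  ∀ π : ℕ → Pos, IsPath π → infOcc (fun i => κ (π i)) ∈ A.F

/-- The language of a PMTA: all `Σ`-projections of trees admitting an accepting run. -/
def Language (A : PMTA σ s) : Set (Pos → σ) :=
  {ξ | ∃ (ζ : Pos → σ × Option (Vec s)) (κ : Pos → A.Q),
      (∀ ρ : Pos, (ζ ρ).1 = ξ ρ) ∧ A.IsAcceptingRun ζ κ}

end PMTA

namespace ParikhAux


lemma enat_summable {ι : Type*} (f : ι → ℕ∞) : Summable f :=
  ⟨_, hasSum_of_isLUB _ (isLUB_iSup (f := fun s : Finset ι => ∑ i ∈ s, f i))⟩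

lemma tsum_coe_eq_sum {ι : Type*} (g : ι → ℕ) (T : Finset ι) (h : ∀ ρ ∉ T, g ρ = 0) :
    ∑' ρ, (g ρ : ℕ∞) = ((∑ ρ ∈ T, g ρ : ℕ) : ℕ∞) := by
  rw [tsum_eq_sum (s := T) (fun b hb => by simp [h b hb]), Nat.cast_sum]

lemma support_finite_of_tsum_lt_top {ι : Type*} (g : ι → ℕ)
    (h : ∑' ρ, (g ρ : ℕ∞) < ⊤) : {ρ | g ρ ≠ 0}.Finite := by
  by_contra hinf
  have hinf : {ρ | g ρ ≠ 0}.Infinite := hinf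
  have key : ∀ n : ℕ, (n : ℕ∞) ≤ ∑' ρ, (g ρ : ℕ∞) := by
    intro n
    obtain ⟨t, hts, htc⟩ := hinf.exists_subset_card_eq n
    calc (n : ℕ∞) = ∑ _ρ ∈ t, 1 := by simp [htc]
      _ ≤ ∑ ρ ∈ t, (g ρ : ℕ∞) := Finset.sum_le_sum (fun ρ hρ => by
          have h1 : g ρ ≠ 0 := hts hρ
          exact_mod_cast Nat.one_le_iff_ne_zero.mpr h1)
      _ ≤ ∑' ρ, (g ρ : ℕ∞) := Summable.sum_le_tsum t (fun _ _ => zero_le) (enat_summable _)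
  have hx : ∑' ρ, (g ρ : ℕ∞) ≠ ⊤ := h.ne
  lift (∑' ρ, (g ρ : ℕ∞)) to ℕ using hx with N hN
  exact absurd (key (N + 1)) (by exact_mod_cast by omega)

lemma semilinear_le (c d : ℕ) : IsSemilinearSetNat {w : Vec 2 | c + w 0 ≤ d + w 1} := by
  classical
  set f := d - c with hf
  set e := c - d with he
  refine ⟨f + 1, fun t => {w | ∃ m : Fin 2 → ℕ,
      w = (fun j => if j = 0 then (t : ℕ) else e) +
        ∑ i, m i • (fun i' j => if i' = 0 then 1 else if j = 1 then 1 else 0 : Fin 2 → Vec 2) i},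
    fun t => ⟨2, _, _, rfl⟩, ?_⟩
  ext w
  simp only [Set.mem_setOf_eq, Set.mem_iUnion]
  constructor
  · intro hw
    refine ⟨⟨min (w 0) f, by omega⟩, ![w 0 - min (w 0) f,
        w 1 - (e + (w 0 - min (w 0) f))], ?_⟩
    funext j
    fin_cases j <;>
      simp [Fin.sum_univ_two] <;> omega
  · rintro ⟨t, m, rfl⟩
    have ht : (t : ℕ) ≤ f := Nat.lt_succ_iff.mp t.isLt
    simp [Fin.sum_univ_two]
    omega


end ParikhAux


/-- A tree language is PMTA-recognizable if it is the language of some PMTA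
(of some dimension). -/
def PMTARecognizable {σ : Type} (L : Set (Pos → σ)) : Prop :=
  ∃ (s : ℕ) (A : PMTA σ s), A.Language = L


namespace ParikhAux

def lab (r k : ℕ) (cc : Fin r → ℕ) (dd : Fin k → ℕ) (θ : Finset (Fin r ⊕ Fin k)) : Vec 2 :=
  ![∑ i : Fin r, if Sum.inl i ∈ θ then cc i else 0,
    ∑ j : Fin k, if Sum.inr j ∈ θ then dd j else 0]

noncomputable def aut (σ : Type) (r k c d : ℕ) (cc : Fin r → ℕ) (dd : Fin k → ℕ) :
    PMTA (σ × Finset (Fin r ⊕ Fin k)) 2 where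
  Q := Bool
  finQ := inferInstance
  QP := {false}
  Qω := {true}
  hdisj := by simp [Set.disjoint_left]
  hcover := by ext b; cases b <;> simp
  qI := false
  D := Set.range (lab r k cc dd)
  hD := Set.finite_range _
  ΔP := {t | t.1 = false ∧ t.2.1.2 = lab r k cc dd t.2.1.1.2}
  Δω := {t | t.1 = true ∧ t.2.1.2 = (∅ : Finset (Fin r ⊕ Fin k)) ∧
      t.2.2.1 = true ∧ t.2.2.2 = true}
  hΔP := fun t ht => ⟨by simp [ht.1], ⟨_, ht.2.symm⟩⟩
  hΔω := fun t ht => ⟨by simp [ht.1], by simp [ht.2.2.1], by simp [ht.2.2.2]⟩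
  F := {{true}}
  hF := by rintro X hX; simp only [Set.mem_singleton_iff] at hX; subst hX; rfl
  C := {w | c + w 0 ≤ d + w 1}
  hC := semilinear_le c d

end ParikhAux

/-- The language of a Parikh constraint
`c + Σ_ρ Σ_{i : Xᵢ ∈ θ_ρ} cᵢ  ≤  d + Σ_ρ Σ_{j : Yⱼ ∈ θ_ρ} dⱼ  < ∞`
over the alphabet `Σ × 𝒫({X₁,…,X_r,Y₁,…,Y_k})` is recognizable by a PMTA of
dimension 2.  The (possibly infinite) sums are evaluated in `ℕ∞`. -/
theorem parikh_constraint_recognizable {σ : Type} [Fintype σ] (r k : ℕ)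
    (c d : ℕ) (cc : Fin r → ℕ) (dd : Fin k → ℕ)
    (hcc : ∀ i, 1 ≤ cc i) (hdd : ∀ j, 1 ≤ dd j) :
    ∃ A : PMTA (σ × Finset (Fin r ⊕ Fin k)) 2,
      A.Language = {ξ : Pos → σ × Finset (Fin r ⊕ Fin k) |
        ((c : ℕ∞) + ∑' ρ : Pos,
            ((∑ i : Fin r, if Sum.inl i ∈ (ξ ρ).2 then cc i else 0 : ℕ) : ℕ∞)
          ≤ (d : ℕ∞) + ∑' ρ : Pos,
            ((∑ j : Fin k, if Sum.inr j ∈ (ξ ρ).2 then dd j else 0 : ℕ) : ℕ∞)) ∧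
        (d : ℕ∞) + ∑' ρ : Pos,
            ((∑ j : Fin k, if Sum.inr j ∈ (ξ ρ).2 then dd j else 0 : ℕ) : ℕ∞) < ⊤} := by
  classical
  refine ⟨ParikhAux.aut σ r k c d cc dd, ?_⟩
  ext ξ
  simp only [PMTA.Language, Set.mem_setOf_eq]
  set gL : Pos → ℕ := fun ρ => ∑ i : Fin r, if Sum.inl i ∈ (ξ ρ).2 then cc i else 0 with hgL
  set gR : Pos → ℕ := fun ρ => ∑ j : Fin k, if Sum.inr j ∈ (ξ ρ).2 then dd j else 0 with hgR
  constructor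
  · rintro ⟨ζ, κ, hproj, ⟨hrunI, hrunP, hrunω⟩, hfin, hCne, hDmem, hmul⟩
    have hnone : ∀ ρ, (ζ ρ).2 = none → κ ρ = true ∧ (ξ ρ).2 = ∅ := by
      intro ρ h
      have h2 := hrunω ρ h
      simp only [ParikhAux.aut, Set.mem_setOf_eq] at h2
      exact ⟨h2.1, by rw [← hproj ρ]; exact h2.2.1⟩
    have hsome : ∀ ρ v, (ζ ρ).2 = some v → v = ParikhAux.lab r k cc dd (ξ ρ).2 := by
      intro ρ v h
      have h2 := hrunP ρ v h
      simp only [ParikhAux.aut, Set.mem_setOf_eq] at h2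
      rw [← hproj ρ]; exact h2.2
    have hqI : κ [] = false := by
      have := hrunI; simpa [ParikhAux.aut] using this
    have hroot : (ζ []).2 ≠ none := by
      intro h
      have := (hnone [] h).1
      rw [hqI] at this; exact Bool.false_ne_true this
    set T : Finset Pos := hfin.toFinset with hT
    have hmemT : ∀ ρ, ρ ∈ T ↔ (ζ ρ).2 ≠ none := by
      intro ρ; rw [hT, Set.Finite.mem_toFinset]; rfl
    have hθ0 : ∀ ρ ∉ T, (ξ ρ).2 = ∅ := by
      intro ρ hρ
      have : (ζ ρ).2 = none := by
        by_contra h; exact hρ ((hmemT ρ).2 h)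
      exact (hnone ρ this).2
    have hgL0 : ∀ ρ ∉ T, gL ρ = 0 := by
      intro ρ hρ; rw [hgL]; simp [hθ0 ρ hρ]
    have hgR0 : ∀ ρ ∉ T, gR ρ = 0 := by
      intro ρ hρ; rw [hgR]; simp [hθ0 ρ hρ]
    have hparikh : PMTA.parikh ζ = ∑ ρ ∈ T, ParikhAux.lab r k cc dd (ξ ρ).2 := by
      rw [PMTA.parikh, finsum_eq_sum_of_support_subset _ (s := T) ?_]
      · refine Finset.sum_congr rfl (fun ρ hρ => ?_)
        obtain ⟨v, hv⟩ := Option.ne_none_iff_exists'.mp ((hmemT ρ).1 hρ)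
        rw [hv, Option.getD_some, hsome ρ v hv]
      · intro ρ hρ
        simp only [Function.mem_support] at hρ
        have : (ζ ρ).2 ≠ none := by
          intro h; rw [h] at hρ; exact hρ rfl
        exact Finset.mem_coe.mpr ((hmemT ρ).2 this)
    have h0 : (PMTA.parikh ζ) 0 = ∑ ρ ∈ T, gL ρ := by
      rw [hparikh, Finset.sum_apply]
      exact Finset.sum_congr rfl (fun ρ _ => by simp [ParikhAux.lab, hgL])
    have h1 : (PMTA.parikh ζ) 1 = ∑ ρ ∈ T, gR ρ := by
      rw [hparikh, Finset.sum_apply]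
      exact Finset.sum_congr rfl (fun ρ _ => by simp [ParikhAux.lab, hgR])
    have hCval : c + (PMTA.parikh ζ) 0 ≤ d + (PMTA.parikh ζ) 1 := by
      have := hCne ⟨[], hroot⟩
      simpa [ParikhAux.aut] using this
    rw [h0, h1] at hCval
    rw [ParikhAux.tsum_coe_eq_sum gL T hgL0, ParikhAux.tsum_coe_eq_sum gR T hgR0]
    constructor
    · exact_mod_cast hCval
    · rw [← Nat.cast_add]
      exact ENat.coe_lt_top _
  · rintro ⟨hle, hlt⟩
    have hgL' : ∀ ρ, (∑ i : Fin r, if Sum.inl i ∈ (ξ ρ).2 then cc i else 0) = gL ρ :=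
      fun ρ => by rw [hgL]
    have hgR' : ∀ ρ, (∑ j : Fin k, if Sum.inr j ∈ (ξ ρ).2 then dd j else 0) = gR ρ :=
      fun ρ => by rw [hgR]
    simp only [hgL', hgR'] at hle hlt
    have hLlt : ∑' ρ, (gL ρ : ℕ∞) < ⊤ :=
      lt_of_le_of_lt (le_trans le_add_self hle) hlt
    have hRfin : {ρ | gR ρ ≠ 0}.Finite :=
      ParikhAux.support_finite_of_tsum_lt_top gR (lt_of_le_of_lt le_add_self hlt)
    have hLfin : {ρ | gL ρ ≠ 0}.Finite :=
      ParikhAux.support_finite_of_tsum_lt_top gL hLlt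
    set S : Set Pos := {ρ | (ξ ρ).2 ≠ ∅} with hS
    have hSfin : S.Finite := by
      refine (hLfin.union hRfin).subset (fun ρ hρ => ?_)
      rw [hS, Set.mem_setOf_eq, ← Finset.nonempty_iff_ne_empty] at hρ
      obtain ⟨x, hx⟩ := hρ
      rcases x with i | j
      · left
        intro h0
        rw [hgL] at h0
        have := (Finset.sum_eq_zero_iff.mp h0) i (Finset.mem_univ i)
        rw [if_pos hx] at this
        exact absurd this (by have := hcc i; omega)
      · right
        intro h0
        rw [hgR] at h0
        have := (Finset.sum_eq_zero_iff.mp h0) j (Finset.mem_univ j)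
        rw [if_pos hx] at this
        exact absurd this (by have := hdd j; omega)
    set Tset : Set Pos := {ρ : Pos | ρ = [] ∨ ∃ ρ' ∈ S, ρ <+: ρ'} with hTset
    have hTfin : Tset.Finite := by
      have : Tset ⊆ {([] : Pos)} ∪ ⋃ ρ' ∈ S, {ρ : Pos | ρ <+: ρ'} := by
        rintro ρ (h | ⟨ρ', hρ', hpre⟩)
        · exact Or.inl h
        · exact Or.inr (Set.mem_biUnion hρ' hpre)
      refine Set.Finite.subset ((Set.finite_singleton _).union
        (hSfin.biUnion (fun ρ' _ => ?_))) this
      refine Set.Finite.subset (ρ'.inits.toFinset.finite_toSet) (fun x hx => ?_)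
      simp only [Finset.coe_sort_coe, Finset.mem_coe, List.mem_toFinset, List.mem_inits]
      exact hx
    have hTnil : [] ∈ Tset := Or.inl rfl
    have hST : S ⊆ Tset := fun ρ hρ => Or.inr ⟨ρ, hρ, List.prefix_refl ρ⟩
    have hTclosed : ∀ (ρ : Pos) (b : Bool), ρ ++ [b] ∈ Tset → ρ ∈ Tset := by
      rintro ρ b (h | ⟨ρ', hρ', hpre⟩)
      · exact absurd h (by simp)
      · exact Or.inr ⟨ρ', hρ', (List.prefix_append ρ [b]).trans hpre⟩
    have hθT : ∀ ρ ∉ Tset, (ξ ρ).2 = ∅ := by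
      intro ρ hρ
      by_contra h
      exact hρ (hST h)
    refine ⟨fun ρ => (ξ ρ, if ρ ∈ Tset then some (ParikhAux.lab r k cc dd (ξ ρ).2) else none),
      fun ρ => if ρ ∈ Tset then false else true, fun ρ => rfl, ⟨?_, ?_, ?_⟩, ?_, ?_, ?_, ?_⟩
    · simp only [if_pos hTnil]; rfl
    · intro ρ v h
      simp only at h
      by_cases hρ : ρ ∈ Tset
      · rw [if_pos hρ] at h
        rw [Option.some_inj] at h
        simp only [ParikhAux.aut, Set.mem_setOf_eq, if_pos hρ]
        exact ⟨rfl, h.symm⟩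
      · rw [if_neg hρ] at h; exact absurd h (by simp)
    · intro ρ h
      simp only at h
      by_cases hρ : ρ ∈ Tset
      · rw [if_pos hρ] at h; exact absurd h (by simp)
      · have hc0 : ρ ++ [false] ∉ Tset := fun hc => hρ (hTclosed ρ false hc)
        have hc1 : ρ ++ [true] ∉ Tset := fun hc => hρ (hTclosed ρ true hc)
        simp only [ParikhAux.aut, Set.mem_setOf_eq, if_neg hρ, if_neg hc0, if_neg hc1]
        exact ⟨rfl, hθT ρ hρ, rfl, rfl⟩
    · have : PMTA.cntPos (fun ρ =>
          ((ξ ρ, if ρ ∈ Tset then some (ParikhAux.lab r k cc dd (ξ ρ).2) else none) :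
            (σ × Finset (Fin r ⊕ Fin k)) × Option (Vec 2))) = Tset := by
        ext ρ
        by_cases hρ : ρ ∈ Tset <;> simp [PMTA.cntPos, hρ]
      rw [this]; exact hTfin
    · intro _
      set ζ : Pos → (σ × Finset (Fin r ⊕ Fin k)) × Option (Vec 2) := fun ρ =>
        (ξ ρ, if ρ ∈ Tset then some (ParikhAux.lab r k cc dd (ξ ρ).2) else none) with hζ
      set TF : Finset Pos := hTfin.toFinset with hTF
      have hgL0 : ∀ ρ ∉ TF, gL ρ = 0 := by
        intro ρ hρ
        rw [hTF, Set.Finite.mem_toFinset] at hρ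
        rw [hgL]; simp [hθT ρ hρ]
      have hgR0 : ∀ ρ ∉ TF, gR ρ = 0 := by
        intro ρ hρ
        rw [hTF, Set.Finite.mem_toFinset] at hρ
        rw [hgR]; simp [hθT ρ hρ]
      have hparikh : PMTA.parikh ζ = ∑ ρ ∈ TF, ParikhAux.lab r k cc dd (ξ ρ).2 := by
        rw [PMTA.parikh, finsum_eq_sum_of_support_subset _ (s := TF) ?_]
        · refine Finset.sum_congr rfl (fun ρ hρ => ?_)
          rw [hTF, Set.Finite.mem_toFinset] at hρ
          simp [hζ, if_pos hρ]
        · intro ρ hρ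
          simp only [Function.mem_support] at hρ
          by_cases h : ρ ∈ Tset
          · rw [hTF]
            exact Finset.mem_coe.mpr (Set.Finite.mem_toFinset hTfin |>.mpr h)
          · exfalso; apply hρ; simp [hζ, if_neg h]
      have h0 : (PMTA.parikh ζ) 0 = ∑ ρ ∈ TF, gL ρ := by
        rw [hparikh, Finset.sum_apply]
        exact Finset.sum_congr rfl (fun ρ _ => by simp [ParikhAux.lab, hgL])
      have h1 : (PMTA.parikh ζ) 1 = ∑ ρ ∈ TF, gR ρ := by
        rw [hparikh, Finset.sum_apply]
        exact Finset.sum_congr rfl (fun ρ _ => by simp [ParikhAux.lab, hgR])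
      rw [ParikhAux.tsum_coe_eq_sum gL TF hgL0, ParikhAux.tsum_coe_eq_sum gR TF hgR0] at hle
      have hle' : c + ∑ ρ ∈ TF, gL ρ ≤ d + ∑ ρ ∈ TF, gR ρ := by exact_mod_cast hle
      show c + (PMTA.parikh ζ) 0 ≤ d + (PMTA.parikh ζ) 1
      rw [h0, h1]; exact hle'
    · intro ρ v h
      simp only at h
      by_cases hρ : ρ ∈ Tset
      · rw [if_pos hρ, Option.some_inj] at h
        exact ⟨(ξ ρ).2, h⟩
      · rw [if_neg hρ] at h; exact absurd h (by simp)
    · intro π hπ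
      have hlen : ∀ i, (π i).length = i := by
        intro i
        induction i with
        | zero => simp [hπ.1]
        | succ n ih =>
          obtain ⟨b, hb⟩ := hπ.2 n
          simp [hb, ih]
      have hπinj : Function.Injective π := by
        intro a b hab
        rw [← hlen a, ← hlen b, hab]
      have hfalse : {n : ℕ | (if π n ∈ Tset then false else true) = false}.Finite := by
        refine Set.Finite.subset (Set.Finite.preimage hπinj.injOn hTfin) (fun n hn => ?_)
        simp only [Set.mem_setOf_eq] at hn
        by_cases h : π n ∈ Tset
        · exact h
        · rw [if_neg h] at hn; exact absurd hn (by simp)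
      have htrue : {n : ℕ | (if π n ∈ Tset then false else true) = true}.Infinite := by
        have hcomp : {n : ℕ | (if π n ∈ Tset then false else true) = true} =
            {n : ℕ | (if π n ∈ Tset then false else true) = false}ᶜ := by
          ext n
          by_cases h : π n ∈ Tset <;> simp [h]
        rw [hcomp]
        exact hfalse.infinite_compl
      show infOcc _ ∈ (ParikhAux.aut σ r k c d cc dd).F
      have : infOcc (fun i => if π i ∈ Tset then false else true) = {true} := by
        ext q
        cases q
        · simp only [infOcc, Set.mem_setOf_eq, Set.mem_singleton_iff]
          constructor
          · intro h; exact absurd hfalse h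
          · intro h; exact absurd h (by simp)
        · simp only [infOcc, Set.mem_setOf_eq, Set.mem_singleton_iff]
          exact ⟨fun _ => trivial, fun _ => htrue⟩
      refine (congrArg (· ∈ (ParikhAux.aut σ r k c d cc dd).F) this).mpr ?_
      exact rfl
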